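/- For the two-layer radial problem with f⁻(ζ) = C₁(ζa+b)^{n/2} inside and f⁺(ζ) = C₂(ζa+b)^{−n/2} outside (a = R²(0), b = R₀²(τ)), continuity f⁻(1) = f⁺(1) = f(1) together with the dynamic condition (2R²(τ)/a)(−μₒ(f⁺)'(1) + μᵢ(f⁻)'(1)) = G·D and kinematic condition D' = f(1), where R²(τ) = a + b, implies D'/D = G/(n(μᵢ + μₒ)). (This yields the growth rate formula σ = (Qn/(2πR²))·(μₒ−μᵢ)/(μₒ+μᵢ) − (T/(μᵢ+μₒ))(n³−n)/R³ when G = Qn²(μₒ−μᵢ)/(2πR²) − T(n⁴−n²)/R³.) -/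

import Mathlib

theorem two_layer_growth_rate (a b n μi μo C₁ C₂ G D D' : ℝ)
    (ha : 0 < a) (hb : 0 < b) (hn : 0 < n) (hμi : 0 < μi) (hμo : 0 < μo)
    (fm fp : ℝ → ℝ)
    (hfm : ∀ ζ, fm ζ = C₁ * (ζ * a + b) ^ (n / 2))
    (hfp : ∀ ζ, fp ζ = C₂ * (ζ * a + b) ^ (-(n / 2)))
    (hcont : fm 1 = fp 1) (hne : fm 1 ≠ 0) (hD : D ≠ 0)
    (hdyn : 2 * (a + b) / a * (-μo * deriv fp 1 + μi * deriv fm 1) = G * D)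
    (hkin : D' = fm 1) :
    D' / D = G / (n * (μi + μo)) := by
  have hab : (0:ℝ) < a + b := by linarith
  have hab' : a + b ≠ 0 := ne_of_gt hab
  have hfm' : fm = fun ζ => C₁ * (ζ * a + b) ^ (n / 2) := funext hfm
  have hfp' : fp = fun ζ => C₂ * (ζ * a + b) ^ (-(n / 2)) := funext hfp
  subst hfm' hfp' hkin
  have h1 : HasDerivAt (fun x : ℝ => x * a + b) a 1 := by
    simpa using ((hasDerivAt_id (1:ℝ)).mul_const a).add_const b
  have hbase : (1:ℝ) * a + b ≠ 0 := by simpa using hab'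
  have hm : HasDerivAt (fun ζ : ℝ => C₁ * (ζ * a + b) ^ (n / 2))
      (C₁ * (a * (n / 2) * ((1:ℝ) * a + b) ^ (n / 2 - 1))) 1 :=
    (h1.rpow_const (Or.inl hbase)).const_mul C₁
  have hp : HasDerivAt (fun ζ : ℝ => C₂ * (ζ * a + b) ^ (-(n / 2)))
      (C₂ * (a * (-(n / 2)) * ((1:ℝ) * a + b) ^ (-(n / 2) - 1))) 1 :=
    (h1.rpow_const (Or.inl hbase)).const_mul C₂
  rw [hm.deriv, hp.deriv] at hdyn
  simp only [one_mul] at hdyn hcont hne ⊢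
  have e1 : (a + b) ^ (n / 2 - 1) = (a + b) ^ (n / 2) / (a + b) := by
    rw [Real.rpow_sub hab, Real.rpow_one]
  have e2 : (a + b) ^ (-(n / 2) - 1) = (a + b) ^ (-(n / 2)) / (a + b) := by
    rw [Real.rpow_sub hab, Real.rpow_one]
  rw [e1, e2] at hdyn
  set P : ℝ := (a + b) ^ (n / 2) with hP
  set Q : ℝ := (a + b) ^ (-(n / 2)) with hQ
  -- hcont : C₁ * P = C₂ * Q
  have hG : G * D = n * (μi + μo) * (C₁ * P) := by
    have ha' : a ≠ 0 := ne_of_gt ha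
    field_simp at hdyn
    have h2 : (2 * (a + b) * a) * (G * D) = (2 * (a + b) * a) * (n * (μi + μo) * (C₁ * P)) := by
      linear_combination -(2 * (a + b) * a) * hdyn - 2 * (a + b) * a * n * μo * hcont
    exact mul_left_cancel₀ (by positivity) h2
  have hnμ : n * (μi + μo) ≠ 0 := by positivity
  field_simp
  linarith [hG]
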